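/- Suppose Φ(x,v) = v^p + a(x) v^q with 0 ≤ a(x) ≤ 1 and 1 < p < q, and suppose for a ball B_r(x₀) one has osc_{B_r(x₀)} a ≤ A r^{q−p} (log(1/r))^{L(q−p)} and a(x₀) = 0, where A, L > 0 and 0 < r < 1. Then for all v with r ≤ v ≤ K·(log(1/r))^{−L} and all x, y ∈ B_r(x₀): Φ(x, v/r) ≤ γ(K, A, p, q) · Φ(y, v/r), i.e. sup over B_r of Φ(·, v/r) is bounded by a constant times the infimum. -/
import Mathlib


open Real Metric

/-- Double-phase integrand `Φ(x,v) = v^p + a(x)v^q` with `a(x₀) = 0` and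
`osc_{B_r(x₀)} a ≤ A r^{q−p}(log(1/r))^{L(q−p)}`: for `r ≤ v ≤ K(log(1/r))^{−L}`
the values `Φ(·, v/r)` are comparable on `B_r(x₀)` with constant `γ(K,A,p,q)`. -/
theorem statement4 (n : ℕ) (p q A L K : ℝ)
    (hp : 1 < p) (hpq : p < q) (hA : 0 < A) (hL : 0 < L) (hK : 0 < K) :
    ∃ γ : ℝ, 0 < γ ∧
      ∀ (a : (Fin n → ℝ) → ℝ) (x₀ : Fin n → ℝ) (r : ℝ),
        0 < r → r < 1 →
        (∀ x, 0 ≤ a x ∧ a x ≤ 1) →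
        (∀ x ∈ ball x₀ r, ∀ y ∈ ball x₀ r,
          a x - a y ≤ A * r ^ (q - p) * (Real.log (1 / r)) ^ (L * (q - p))) →
        a x₀ = 0 →
        ∀ v : ℝ, r ≤ v → v ≤ K * (Real.log (1 / r)) ^ (-L) →
        ∀ x ∈ ball x₀ r, ∀ y ∈ ball x₀ r,
          (v / r) ^ p + a x * (v / r) ^ q ≤
            γ * ((v / r) ^ p + a y * (v / r) ^ q) := by
  refine ⟨1 + A * K ^ (q - p), by positivity, ?_⟩
  intro a x₀ r hr hr1 hab hosc ha0 v hrv hvK x hx y hy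
  have hLg : 0 < Real.log (1 / r) := Real.log_pos (by rw [lt_div_iff₀ hr]; linarith)
  have hvr : (0:ℝ) < v / r := div_pos (lt_of_lt_of_le hr hrv) hr
  have hqp : (0:ℝ) < q - p := by linarith
  -- bound on a x
  have hax : a x ≤ A * r ^ (q - p) * (Real.log (1 / r)) ^ (L * (q - p)) := by
    have := hosc x hx x₀ (mem_ball_self hr)
    rw [ha0] at this; linarith
  -- key: v * (log (1/r))^L ≤ K
  have hLgL : (0:ℝ) < (Real.log (1 / r)) ^ L := Real.rpow_pos_of_pos hLg L
  have hvLg : v * (Real.log (1 / r)) ^ L ≤ K := by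
    have h := mul_le_mul_of_nonneg_right hvK hLgL.le
    rwa [mul_assoc, ← Real.rpow_add hLg, neg_add_cancel, Real.rpow_zero, mul_one] at h
  -- r^(q-p) * log^(L(q-p)) * (v/r)^(q-p) = (v * log^L)^(q-p) ≤ K^(q-p)
  have hprod : r ^ (q - p) * (Real.log (1 / r)) ^ (L * (q - p)) * (v / r) ^ (q - p)
      ≤ K ^ (q - p) := by
    have h1 : r ^ (q - p) * (v / r) ^ (q - p) = v ^ (q - p) := by
      rw [← Real.mul_rpow hr.le hvr.le, mul_div_cancel₀ _ (ne_of_gt hr)]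
    have h2 : (Real.log (1 / r)) ^ (L * (q - p))
        = ((Real.log (1 / r)) ^ L) ^ (q - p) := by
      rw [Real.rpow_mul hLg.le]
    calc r ^ (q - p) * (Real.log (1 / r)) ^ (L * (q - p)) * (v / r) ^ (q - p)
        = (r ^ (q - p) * (v / r) ^ (q - p)) * ((Real.log (1 / r)) ^ L) ^ (q - p) := by
          rw [h2]; ring
      _ = (v * (Real.log (1 / r)) ^ L) ^ (q - p) := by
          rw [h1, ← Real.mul_rpow (by linarith : (0:ℝ) ≤ v) hLgL.le]
      _ ≤ K ^ (q - p) := by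
          exact Real.rpow_le_rpow (mul_nonneg (by linarith) hLgL.le) hvLg hqp.le
  -- split (v/r)^q
  have hsplit : (v / r) ^ q = (v / r) ^ p * (v / r) ^ (q - p) := by
    rw [← Real.rpow_add hvr]; ring_nf
  have hvp : (0:ℝ) < (v / r) ^ p := Real.rpow_pos_of_pos hvr p
  have hax' : a x * (v / r) ^ q ≤ A * K ^ (q - p) * (v / r) ^ p := by
    have hvqp : (0:ℝ) ≤ (v / r) ^ (q - p) := (Real.rpow_pos_of_pos hvr _).le
    calc a x * (v / r) ^ q
        ≤ A * r ^ (q - p) * (Real.log (1 / r)) ^ (L * (q - p)) * (v / r) ^ q :=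
          mul_le_mul_of_nonneg_right hax (by positivity)
      _ = A * (r ^ (q - p) * (Real.log (1 / r)) ^ (L * (q - p)) * (v / r) ^ (q - p))
            * (v / r) ^ p := by rw [hsplit]; ring
      _ ≤ A * K ^ (q - p) * (v / r) ^ p := by
          apply mul_le_mul_of_nonneg_right _ hvp.le
          exact mul_le_mul_of_nonneg_left hprod hA.le
  have hay : 0 ≤ a y * (v / r) ^ q := by
    have := (hab y).1
    positivity
  have hγ : (0:ℝ) < 1 + A * K ^ (q - p) := by positivity
  calc (v / r) ^ p + a x * (v / r) ^ q
      ≤ (1 + A * K ^ (q - p)) * (v / r) ^ p := by linarith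
    _ ≤ (1 + A * K ^ (q - p)) * ((v / r) ^ p + a y * (v / r) ^ q) := by nlinarith
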